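/- In a metric transportation game with n players and m buses, let σ be a Nash equilibrium and let j* be a bus satisfying d(p_1^{j*},t) + (route length of j*) ≤ (2/m)·Σ_{k∈N} d(k,t). Then every player i with σ_i ≠ j* has equilibrium cost c_i(σ) ≤ d(i,t) + (2/m)·Σ_{k∈N} d(k,t), and every player i with σ_i = j* has c_i(σ) ≤ (2/m)·Σ_{k∈N} d(k,t). -/

import Mathlib

open Finset

/-- Length of a bus route that visits the points of `l` in order and then ends at the
destination `t` (the initial segment from the depot is ignored). -/
noncomputable def routeLen {V : Type*} [PseudoMetricSpace V] (t : V) (l : List V) : ℝ :=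
  ∑ i ∈ Finset.range l.length, dist (l.getD i t) (l.getD (i + 1) t)

/-- The route of bus `j` under outcome `σ`: the players that chose bus `j`, in the order
given by the fixed permutation list `ord j` of bus `j`. -/
def busRoute {n m : ℕ} (ord : Fin m → List (Fin n)) (σ : Fin n → Fin m) (j : Fin m) :
    List (Fin n) :=
  (ord j).filter (fun i => decide (σ i = j))

/-- `ord` gives, for every bus, a permutation of all the players. -/
def validOrd {n m : ℕ} (ord : Fin m → List (Fin n)) : Prop :=
  ∀ j : Fin m, (ord j).Nodup ∧ ∀ i : Fin n, i ∈ ord j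

/-- The cost of player `i` under outcome `σ`: the distance traveled by `i`'s bus from the
location of `i` to the destination `t`. -/
noncomputable def playerCost {V : Type*} [PseudoMetricSpace V] {n m : ℕ}
    (x : Fin n → V) (t : V) (ord : Fin m → List (Fin n)) (σ : Fin n → Fin m)
    (i : Fin n) : ℝ :=
  routeLen t
    (((busRoute ord σ (σ i)).drop ((busRoute ord σ (σ i)).idxOf i)).map x)

/-- The utilitarian social cost: the sum of the costs of all players. -/
noncomputable def socialU {V : Type*} [PseudoMetricSpace V] {n m : ℕ}
    (x : Fin n → V) (t : V) (ord : Fin m → List (Fin n)) (σ : Fin n → Fin m) : ℝ :=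
  ∑ i : Fin n, playerCost x t ord σ i

/-- The egalitarian social cost: the largest cost of a player. -/
noncomputable def socialE {V : Type*} [PseudoMetricSpace V] {n m : ℕ}
    (x : Fin n → V) (t : V) (ord : Fin m → List (Fin n)) (σ : Fin n → Fin m) : ℝ :=
  ⨆ i : Fin n, playerCost x t ord σ i

/-- `σ` is a (pure) Nash equilibrium: no player can decrease her cost by unilaterally
switching to another bus. -/
def isNash {V : Type*} [PseudoMetricSpace V] {n m : ℕ}
    (x : Fin n → V) (t : V) (ord : Fin m → List (Fin n)) (σ : Fin n → Fin m) : Prop :=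
  ∀ i : Fin n, ∀ j : Fin m,
    playerCost x t ord σ i ≤ playerCost x t ord (Function.update σ i j) i


lemma routeLen_cons {V : Type*} [PseudoMetricSpace V] (t a : V) (s : List V) :
    routeLen t (a :: s) = dist a (s.getD 0 t) + routeLen t s := by
  simp only [routeLen, List.length_cons, Finset.sum_range_succ']
  rw [add_comm]
  simp [List.getD_cons_succ, List.getD_cons_zero]

lemma routeLen_nonneg {V : Type*} [PseudoMetricSpace V] (t : V) (l : List V) :
    0 ≤ routeLen t l :=
  Finset.sum_nonneg fun _ _ => dist_nonneg

lemma g_drop {V : Type*} [PseudoMetricSpace V] (t : V) (k : ℕ) (l : List V) :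
    dist ((l.drop k).getD 0 t) t + routeLen t (l.drop k) ≤
      dist (l.getD 0 t) t + routeLen t l := by
  induction k generalizing l with
  | zero => simp
  | succ k ih =>
    cases l with
    | nil => simp
    | cons a s =>
      calc dist (((a::s).drop (k+1)).getD 0 t) t + routeLen t ((a::s).drop (k+1))
          = dist ((s.drop k).getD 0 t) t + routeLen t (s.drop k) := by
            rw [List.drop_succ_cons]
        _ ≤ dist (s.getD 0 t) t + routeLen t s := ih s
        _ ≤ dist ((a::s).getD 0 t) t + routeLen t (a::s) := by
            rw [routeLen_cons, List.getD_cons_zero]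
            have := dist_triangle (s.getD 0 t) a t
            rw [dist_comm (s.getD 0 t) a] at this
            linarith

lemma routeLen_drop_le {V : Type*} [PseudoMetricSpace V] (t : V) (k : ℕ) (l : List V) :
    routeLen t (l.drop k) ≤ dist (l.getD 0 t) t + routeLen t l := by
  have := g_drop t k l
  have h2 : (0:ℝ) ≤ dist ((l.drop k).getD 0 t) t := dist_nonneg
  linarith

/-- if `σ` is a Nash equilibrium and `j*` is a bus with
`d(p_1^{j*},t) + (route length of j*) ≤ (2/m)·Σ_k d(k,t)`, then every player `i` with
`σ_i ≠ j*` has `c_i(σ) ≤ d(i,t) + (2/m)·Σ_k d(k,t)`, and every player `i` with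
`σ_i = j*` has `c_i(σ) ≤ (2/m)·Σ_k d(k,t)`. -/
theorem stmt16 {V : Type*} [MetricSpace V] {n m : ℕ}
    (x : Fin n → V) (t : V) (ord : Fin m → List (Fin n)) (hord : validOrd ord)
    (σ : Fin n → Fin m) (hNE : isNash x t ord σ) (jstar : Fin m)
    (hj : dist (((busRoute ord σ jstar).map x).getD 0 t) t +
            routeLen t ((busRoute ord σ jstar).map x) ≤
          (2 / (m : ℝ)) * ∑ k : Fin n, dist (x k) t) :
    (∀ i : Fin n, σ i ≠ jstar →
        playerCost x t ord σ i ≤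
          dist (x i) t + (2 / (m : ℝ)) * ∑ k : Fin n, dist (x k) t) ∧
    (∀ i : Fin n, σ i = jstar →
        playerCost x t ord σ i ≤ (2 / (m : ℝ)) * ∑ k : Fin n, dist (x k) t) := by
  set S := (2 / (m : ℝ)) * ∑ k : Fin n, dist (x k) t with hS
  set r := busRoute ord σ jstar with hr0
  constructor
  · -- deviating players
    intro i hne
    have hNE' := hNE i jstar
    obtain ⟨A, B, hAB⟩ := List.append_of_mem ((hord jstar).2 i)
    have hnd := (hord jstar).1
    rw [hAB] at hnd
    have hiA : i ∉ A := by
      intro hmem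
      exact (List.nodup_append'.mp hnd).2.2 hmem List.mem_cons_self
    have hiB : i ∉ B := by
      have := (List.nodup_append'.mp hnd).2.1
      exact (List.nodup_cons.mp this).1
    have hfA : A.filter (fun k => decide (Function.update σ i jstar k = jstar)) =
        A.filter (fun k => decide (σ k = jstar)) := by
      apply List.filter_congr
      intro a ha
      have : a ≠ i := fun h => hiA (h ▸ ha)
      rw [Function.update_of_ne this]
    have hfB : B.filter (fun k => decide (Function.update σ i jstar k = jstar)) =
        B.filter (fun k => decide (σ k = jstar)) := by
      apply List.filter_congr
      intro a ha
      have : a ≠ i := fun h => hiB (h ▸ ha)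
      rw [Function.update_of_ne this]
    have hr' : busRoute ord (Function.update σ i jstar) jstar =
        A.filter (fun k => decide (σ k = jstar)) ++
          i :: B.filter (fun k => decide (σ k = jstar)) := by
      unfold busRoute
      rw [hAB, List.filter_append, List.filter_cons, hfA, hfB]
      simp [Function.update_self]
    have hr : r = A.filter (fun k => decide (σ k = jstar)) ++
        B.filter (fun k => decide (σ k = jstar)) := by
      rw [hr0]
      unfold busRoute
      rw [hAB, List.filter_append, List.filter_cons]
      simp [hne]
    have hiAf : i ∉ A.filter (fun k => decide (σ k = jstar)) :=
      fun h => hiA (List.mem_of_mem_filter h)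
    have hidx : (busRoute ord (Function.update σ i jstar) jstar).idxOf i =
        (A.filter (fun k => decide (σ k = jstar))).length := by
      rw [hr', List.idxOf_append_of_notMem hiAf, List.idxOf_cons_self, Nat.add_zero]
    have hdrop : (busRoute ord (Function.update σ i jstar) jstar).drop
        ((busRoute ord (Function.update σ i jstar) jstar).idxOf i) =
        i :: B.filter (fun k => decide (σ k = jstar)) := by
      rw [hidx, hr', List.drop_left]
    have hcost : playerCost x t ord (Function.update σ i jstar) i =
        routeLen t (x i :: (B.filter (fun k => decide (σ k = jstar))).map x) := by
      unfold playerCost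
      rw [Function.update_self, hdrop, List.map_cons]
    have hBdrop : (B.filter (fun k => decide (σ k = jstar))).map x =
        (r.map x).drop ((A.filter (fun k => decide (σ k = jstar))).length) := by
      rw [hr, ← List.map_drop, List.drop_left]
    set L := (r.map x).drop ((A.filter (fun k => decide (σ k = jstar))).length) with hL
    have key : routeLen t (x i :: L) ≤ dist (x i) t + S := by
      rw [routeLen_cons]
      have htri : dist (x i) (L.getD 0 t) ≤ dist (x i) t + dist (L.getD 0 t) t := by
        have := dist_triangle (x i) t (L.getD 0 t)
        rw [dist_comm (L.getD 0 t) t]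
        linarith
      have hg := g_drop t ((A.filter (fun k => decide (σ k = jstar))).length) (r.map x)
      rw [← hL] at hg
      linarith [hj]
    calc playerCost x t ord σ i ≤ playerCost x t ord (Function.update σ i jstar) i := hNE'
      _ = routeLen t (x i :: L) := by rw [hcost, hBdrop]
      _ ≤ dist (x i) t + S := key
  · -- players on bus jstar
    intro i hi
    have hcost : playerCost x t ord σ i = routeLen t ((r.map x).drop (r.idxOf i)) := by
      unfold playerCost
      rw [hi, ← hr0, List.map_drop]
    rw [hcost]
    calc routeLen t ((r.map x).drop (r.idxOf i))
        ≤ dist ((r.map x).getD 0 t) t + routeLen t (r.map x) :=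
          routeLen_drop_le t (r.idxOf i) (r.map x)
      _ ≤ S := hj
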